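/- Let ħ > 0 and let A, B be real symmetric positive definite n×n matrices. Set X = {x ∈ ℝⁿ : Ax·x ≤ ħ}, P = {p ∈ ℝⁿ : Bp·p ≤ ħ}, and let λ ≥ 1 satisfy λX^ħ ⊆ P. Then the ellipsoid Ω_λ = {(x,p) ∈ ℝ^{2n} : λ²Ax·x + λ^{−2}A⁻¹p·p ≤ ħ} is a quantum blob, and Ω_λ is contained in the ellipsoid {(x,p) : Ax·x + Bp·p ≤ ħ} (in particular Ω_λ ⊆ X × P). -/

import Mathlib

open Matrix

noncomputable section

/-- The `ℏ`-polar dual of a set `X ⊆ ℝⁿ`. -/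
def polarDual (ℏ : ℝ) {n : ℕ} (X : Set (Fin n → ℝ)) : Set (Fin n → ℝ) :=
  {p | ∀ x ∈ X, p ⬝ᵥ x ≤ ℏ}

/-- The standard symplectic matrix `J = [[0, I],[-I, 0]]` on `ℝⁿ × ℝⁿ`. -/
def stdJ (n : ℕ) : Matrix (Fin n ⊕ Fin n) (Fin n ⊕ Fin n) ℝ :=
  Matrix.fromBlocks 0 1 (-1) 0

/-- `S ∈ Sp(2n, ℝ)` iff `Sᵀ J S = J`. -/
def IsSymplectic {n : ℕ} (S : Matrix (Fin n ⊕ Fin n) (Fin n ⊕ Fin n) ℝ) : Prop :=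
  Sᵀ * stdJ n * S = stdJ n

/-- The closed ball of radius `r` centered at `0` in phase space `ℝⁿ × ℝⁿ`. -/
def ballPhase (n : ℕ) (r : ℝ) : Set ((Fin n ⊕ Fin n) → ℝ) :=
  {z | ∑ i, z i ^ 2 ≤ r ^ 2}

private lemma mulVec_blockDiag' {n : ℕ} (P Q : Matrix (Fin n) (Fin n) ℝ)
    (z : Fin n ⊕ Fin n → ℝ) :
    (fromBlocks P 0 0 Q).mulVec z
      = Sum.elim (P.mulVec (z ∘ Sum.inl)) (Q.mulVec (z ∘ Sum.inr)) := by
  funext i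
  cases i <;> simp [mulVec, dotProduct, Fintype.sum_sum_type, Function.comp]

private lemma quad_sqrt' {n : ℕ} (M : Matrix (Fin n) (Fin n) ℝ) (hM : Mᵀ = M)
    (x : Fin n → ℝ) :
    M.mulVec x ⬝ᵥ M.mulVec x = (M * M).mulVec x ⬝ᵥ x := by
  rw [dotProduct_mulVec, ← mulVec_transpose, hM, ← mulVec_mulVec]

private lemma dot_self_nonneg' {m : ℕ} (v : Fin m → ℝ) : 0 ≤ v ⬝ᵥ v :=
  Finset.sum_nonneg fun _ _ => mul_self_nonneg _

/-- If `λ ≥ 1` satisfies `λX^ℏ ⊆ P` (with `X`, `P` the ellipsoids carried by `A`, `B`),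
then the rescaled ellipsoid `Ω_λ = {(x,p) : λ²Ax·x + λ⁻²A⁻¹p·p ≤ ℏ}` is a quantum blob
contained in `{(x,p) : Ax·x + Bp·p ≤ ℏ}`, in particular contained in `X × P`. -/
theorem statement16 (n : ℕ) (ℏ : ℝ) (hℏ : 0 < ℏ)
    (A B : Matrix (Fin n) (Fin n) ℝ) (hA : A.PosDef) (hB : B.PosDef)
    (lam : ℝ) (hlam : 1 ≤ lam)
    (hscale : (fun p : Fin n → ℝ => lam • p) ''
        polarDual ℏ {x : Fin n → ℝ | A.mulVec x ⬝ᵥ x ≤ ℏ}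
      ⊆ {p : Fin n → ℝ | B.mulVec p ⬝ᵥ p ≤ ℏ}) :
    (∃ S : Matrix (Fin n ⊕ Fin n) (Fin n ⊕ Fin n) ℝ, IsSymplectic S ∧
      {z : (Fin n ⊕ Fin n) → ℝ |
          lam ^ 2 * (A.mulVec (z ∘ Sum.inl) ⬝ᵥ (z ∘ Sum.inl))
            + (lam ^ 2)⁻¹ * (A⁻¹.mulVec (z ∘ Sum.inr) ⬝ᵥ (z ∘ Sum.inr)) ≤ ℏ}
        = S.mulVec '' ballPhase n (Real.sqrt ℏ)) ∧
    {z : (Fin n ⊕ Fin n) → ℝ |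
        lam ^ 2 * (A.mulVec (z ∘ Sum.inl) ⬝ᵥ (z ∘ Sum.inl))
          + (lam ^ 2)⁻¹ * (A⁻¹.mulVec (z ∘ Sum.inr) ⬝ᵥ (z ∘ Sum.inr)) ≤ ℏ}
      ⊆ {z | A.mulVec (z ∘ Sum.inl) ⬝ᵥ (z ∘ Sum.inl)
              + B.mulVec (z ∘ Sum.inr) ⬝ᵥ (z ∘ Sum.inr) ≤ ℏ} ∧
    {z : (Fin n ⊕ Fin n) → ℝ |
        lam ^ 2 * (A.mulVec (z ∘ Sum.inl) ⬝ᵥ (z ∘ Sum.inl))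
          + (lam ^ 2)⁻¹ * (A⁻¹.mulVec (z ∘ Sum.inr) ⬝ᵥ (z ∘ Sum.inr)) ≤ ℏ}
      ⊆ {z | A.mulVec (z ∘ Sum.inl) ⬝ᵥ (z ∘ Sum.inl) ≤ ℏ
              ∧ B.mulVec (z ∘ Sum.inr) ⬝ᵥ (z ∘ Sum.inr) ≤ ℏ} := by
  have hlam0 : lam ≠ 0 := by positivity
  -- square root of A
  obtain ⟨M, hMsym, hMM, hMdet⟩ :
      ∃ M : Matrix (Fin n) (Fin n) ℝ, Mᵀ = M ∧ M * M = A ∧ IsUnit M.det := by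
    open scoped MatrixOrder in
    refine ⟨CFC.sqrt A, ?_, CFC.sqrt_mul_sqrt_self A hA.posSemidef.nonneg, ?_⟩
    · open scoped MatrixOrder in
      have h := (CFC.sqrt_nonneg A).posSemidef.1
      simpa [Matrix.IsHermitian] using h
    · open scoped MatrixOrder in
      have hdet : (CFC.sqrt A).det * (CFC.sqrt A).det = A.det := by
        rw [← det_mul, CFC.sqrt_mul_sqrt_self A hA.posSemidef.nonneg]
      have hAdet : A.det ≠ 0 := hA.det_pos.ne'
      refine isUnit_iff_ne_zero.2 fun h0 => hAdet ?_
      rw [← hdet, h0, mul_zero]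
  have hM1 : M⁻¹ * M = 1 := nonsing_inv_mul M hMdet
  have hM1' : M * M⁻¹ = 1 := mul_nonsing_inv M hMdet
  have hMsym' : (M⁻¹)ᵀ = M⁻¹ := by rw [transpose_nonsing_inv, hMsym]
  have hAinvM : M⁻¹ * M⁻¹ = A⁻¹ := by rw [← hMM, Matrix.mul_inv_rev]
  have qA : ∀ x, A.mulVec x ⬝ᵥ x = M.mulVec x ⬝ᵥ M.mulVec x := fun x => by
    rw [quad_sqrt' M hMsym, hMM]
  have qAinv : ∀ x, A⁻¹.mulVec x ⬝ᵥ x = M⁻¹.mulVec x ⬝ᵥ M⁻¹.mulVec x := fun x => by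
    rw [quad_sqrt' M⁻¹ hMsym', hAinvM]
  have qAnn : ∀ x, 0 ≤ A.mulVec x ⬝ᵥ x := fun x => by
    rw [qA]; exact dot_self_nonneg' _
  have qAinvnn : ∀ x, 0 ≤ A⁻¹.mulVec x ⬝ᵥ x := fun x => by
    rw [qAinv]; exact dot_self_nonneg' _
  -- the ellipsoid carried by A⁻¹ is contained in the polar dual of X
  have key1 : ∀ q : Fin n → ℝ, A⁻¹.mulVec q ⬝ᵥ q ≤ ℏ →
      q ∈ polarDual ℏ {x : Fin n → ℝ | A.mulVec x ⬝ᵥ x ≤ ℏ} := by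
    intro q hq x hx
    have key : q ⬝ᵥ x = (M⁻¹.mulVec q) ⬝ᵥ (M.mulVec x) := by
      rw [dotProduct_mulVec, ← mulVec_transpose, hMsym, mulVec_mulVec, hM1', one_mulVec]
    rw [key]
    have cs := Real.sum_mul_le_sqrt_mul_sqrt Finset.univ (M⁻¹.mulVec q) (M.mulVec x)
    have h1 : ∑ i, (M⁻¹.mulVec q) i ^ 2 ≤ ℏ := by
      have h := qAinv q
      simp only [dotProduct, ← sq] at h ⊢
      rw [← h]; exact hq
    have h2 : ∑ i, (M.mulVec x) i ^ 2 ≤ ℏ := by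
      have h := qA x
      simp only [dotProduct, ← sq] at h ⊢
      rw [← h]; exact hx
    calc (M⁻¹.mulVec q) ⬝ᵥ (M.mulVec x) ≤ _ := cs
      _ ≤ Real.sqrt ℏ * Real.sqrt ℏ :=
          mul_le_mul (Real.sqrt_le_sqrt h1) (Real.sqrt_le_sqrt h2)
            (Real.sqrt_nonneg _) (Real.sqrt_nonneg _)
      _ = ℏ := Real.mul_self_sqrt hℏ.le
  -- the pointwise comparison B ≤ λ⁻² A⁻¹ obtained from hscale by rescaling
  have key2 : ∀ p : Fin n → ℝ, lam ^ 2 * (B.mulVec p ⬝ᵥ p) ≤ A⁻¹.mulVec p ⬝ᵥ p := by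
    intro p
    by_cases hp : p = 0
    · simp [hp]
    · set c := A⁻¹.mulVec p ⬝ᵥ p with hc_def
      have hc : 0 < c := by
        have h := (hA.inv).dotProduct_mulVec_pos hp
        simpa [hc_def, dotProduct_comm] using h
      set s := Real.sqrt (ℏ / c) with hs_def
      have hs2 : s ^ 2 = ℏ / c := Real.sq_sqrt (by positivity)
      have hq0 : A⁻¹.mulVec (s • p) ⬝ᵥ (s • p) ≤ ℏ := by
        have h : A⁻¹.mulVec (s • p) ⬝ᵥ (s • p) = s ^ 2 * c := by
          simp [mulVec_smul, smul_dotProduct, dotProduct_smul, smul_eq_mul]; ring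
        rw [h, hs2]
        field_simp
        exact le_rfl
      have hb := hscale ⟨s • p, key1 _ hq0, rfl⟩
      simp only [Set.mem_setOf_eq, smul_smul, mulVec_smul, smul_dotProduct, dotProduct_smul,
        smul_eq_mul] at hb
      have hs2c : s ^ 2 * c = ℏ := by rw [hs2]; field_simp
      have hs2pos : 0 < s ^ 2 := by rw [hs2]; positivity
      nlinarith [hb, hs2c, hs2pos]
  have hlam2 : 1 ≤ lam ^ 2 := by nlinarith [hlam]
  -- the two inclusions
  have sub1 : {z : (Fin n ⊕ Fin n) → ℝ |
        lam ^ 2 * (A.mulVec (z ∘ Sum.inl) ⬝ᵥ (z ∘ Sum.inl))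
          + (lam ^ 2)⁻¹ * (A⁻¹.mulVec (z ∘ Sum.inr) ⬝ᵥ (z ∘ Sum.inr)) ≤ ℏ}
      ⊆ {z | A.mulVec (z ∘ Sum.inl) ⬝ᵥ (z ∘ Sum.inl)
              + B.mulVec (z ∘ Sum.inr) ⬝ᵥ (z ∘ Sum.inr) ≤ ℏ} := by
    intro z hz
    simp only [Set.mem_setOf_eq] at hz ⊢
    have h1 := qAnn (z ∘ Sum.inl)
    have h2 := key2 (z ∘ Sum.inr)
    have hlam2pos : (0:ℝ) < lam ^ 2 := by positivity
    have h2' : B.mulVec (z ∘ Sum.inr) ⬝ᵥ (z ∘ Sum.inr)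
        ≤ (lam ^ 2)⁻¹ * (A⁻¹.mulVec (z ∘ Sum.inr) ⬝ᵥ (z ∘ Sum.inr)) := by
      rw [le_inv_mul_iff₀ hlam2pos]
      linarith [h2]
    nlinarith [hz, h1, h2', hlam2]
  refine ⟨?_, sub1, ?_⟩
  · -- quantum blob
    refine ⟨fromBlocks (lam⁻¹ • M⁻¹) 0 0 (lam • M), ?_, ?_⟩
    · -- symplectic
      show _ = stdJ n
      simp only [stdJ, fromBlocks_transpose, transpose_smul, hMsym, hMsym', transpose_zero,
        fromBlocks_multiply, Matrix.mul_zero, Matrix.zero_mul, Matrix.mul_one, Matrix.one_mul,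
        add_zero, zero_add, Matrix.mul_neg, Matrix.neg_mul, smul_mul_assoc, mul_smul_comm,
        smul_smul]
      rw [inv_mul_cancel₀ hlam0, mul_inv_cancel₀ hlam0, hM1, hM1']
      simp
    · -- the ellipsoid is the image of the ball
      set S := fromBlocks (lam⁻¹ • M⁻¹) 0 0 (lam • M) with hS_def
      set T := fromBlocks (lam • M) 0 0 (lam⁻¹ • M⁻¹) with hT_def
      have hST : S * T = 1 := by
        simp only [hS_def, hT_def, fromBlocks_multiply, Matrix.mul_zero, Matrix.zero_mul,
          add_zero, zero_add, smul_mul_assoc, mul_smul_comm, smul_smul]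
        rw [inv_mul_cancel₀ hlam0, mul_inv_cancel₀ hlam0, hM1, hM1']
        simp [← fromBlocks_one]
      have hTS : T * S = 1 := by
        simp only [hS_def, hT_def, fromBlocks_multiply, Matrix.mul_zero, Matrix.zero_mul,
          add_zero, zero_add, smul_mul_assoc, mul_smul_comm, smul_smul]
        rw [inv_mul_cancel₀ hlam0, mul_inv_cancel₀ hlam0, hM1, hM1']
        simp [← fromBlocks_one]
      -- quadratic form identity
      have hQ : ∀ z : (Fin n ⊕ Fin n) → ℝ,
          lam ^ 2 * (A.mulVec (z ∘ Sum.inl) ⬝ᵥ (z ∘ Sum.inl))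
            + (lam ^ 2)⁻¹ * (A⁻¹.mulVec (z ∘ Sum.inr) ⬝ᵥ (z ∘ Sum.inr))
          = ∑ i, (T.mulVec z) i ^ 2 := by
        intro z
        rw [hT_def, mulVec_blockDiag']
        rw [Fintype.sum_sum_type]
        simp only [Sum.elim_inl, Sum.elim_inr]
        have e1 : ∀ i, ((lam • M).mulVec (z ∘ Sum.inl)) i = lam * (M.mulVec (z ∘ Sum.inl)) i := by
          intro i; rw [smul_mulVec]; simp
        have e2 : ∀ i, ((lam⁻¹ • M⁻¹).mulVec (z ∘ Sum.inr)) i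
            = lam⁻¹ * (M⁻¹.mulVec (z ∘ Sum.inr)) i := by
          intro i; rw [smul_mulVec]; simp
        simp only [e1, e2, mul_pow]
        rw [← Finset.mul_sum, ← Finset.mul_sum, qA, qAinv]
        simp only [dotProduct, ← sq]
        rw [← inv_pow]
      ext z
      simp only [Set.mem_setOf_eq, Set.mem_image, ballPhase]
      constructor
      · intro hz
        refine ⟨T.mulVec z, ?_, ?_⟩
        · show ∑ i, (T.mulVec z) i ^ 2 ≤ _
          rw [Real.sq_sqrt hℏ.le, ← hQ]
          exact hz
        · rw [mulVec_mulVec, hST, one_mulVec]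
      · rintro ⟨w, hw, rfl⟩
        rw [hQ, mulVec_mulVec, hTS, one_mulVec]
        calc ∑ i, w i ^ 2 ≤ Real.sqrt ℏ ^ 2 := hw
          _ = ℏ := Real.sq_sqrt hℏ.le
  · -- containment in X × P
    intro z hz
    have h := sub1 hz
    simp only [Set.mem_setOf_eq] at h ⊢
    have h1 := qAnn (z ∘ Sum.inl)
    have h2 : 0 ≤ B.mulVec (z ∘ Sum.inr) ⬝ᵥ (z ∘ Sum.inr) := by
      rcases eq_or_ne (z ∘ Sum.inr) 0 with h0 | h0
      · simp [h0]
      · have := hB.dotProduct_mulVec_pos h0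
        simp only [star_trivial] at this
        calc (0:ℝ) ≤ (z ∘ Sum.inr) ⬝ᵥ B.mulVec (z ∘ Sum.inr) := by
              simpa [dotProduct_comm] using this.le
          _ = _ := dotProduct_comm _ _
    exact ⟨by linarith, by linarith⟩
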